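/- A bounded operator H₀ : H → H on a separable Hilbert space is Hilbert–Schmidt if and only if Σ_k ‖H₀ f_k‖² < ∞ for some (equivalently, for every) frame (f_k) of H. Moreover, if (f_k) has frame bounds A, B, then √A · ‖H₀‖_HS ≤ (Σ_k ‖H₀ f_k‖²)^{1/2} ≤ √B · ‖H₀‖_HS. -/

import Mathlib

open scoped InnerProductSpace ENNReal NNReal


-- conversion helpers
lemma hs_conv_summable {α E' : Type*} [NormedAddCommGroup E'] (g : α → E') :
    Summable (fun a => ‖g a‖ ^ 2) ↔ (∑' a, (‖g a‖₊ : ℝ≥0∞) ^ 2) ≠ ⊤ := by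
  have h1 : ∀ a, ‖g a‖ ^ 2 = ((‖g a‖₊ ^ 2 : ℝ≥0) : ℝ) := by intro a; push_cast; rfl
  have h2 : ∀ a, ((‖g a‖₊ : ℝ≥0∞)) ^ 2 = ((‖g a‖₊ ^ 2 : ℝ≥0) : ℝ≥0∞) := by
    intro a; push_cast; rfl
  simp_rw [h1, h2]
  exact (ENNReal.tsum_coe_ne_top_iff_summable_coe).symm

lemma hs_conv_tsum {α E' : Type*} [NormedAddCommGroup E'] (g : α → E') :
    ∑' a, ‖g a‖ ^ 2 = (∑' a, (‖g a‖₊ : ℝ≥0∞) ^ 2).toReal := by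
  rw [ENNReal.tsum_toReal_eq (fun a => ENNReal.pow_ne_top ENNReal.coe_ne_top)]
  exact tsum_congr fun a => by simp [ENNReal.toReal_pow]

lemma hs_parseval {H : Type*} [NormedAddCommGroup H] [InnerProductSpace ℂ H] [CompleteSpace H]
    {ι : Type*} (e : HilbertBasis ι ℂ H) (x : H) :
    ∑' i, (‖⟪e i, x⟫_ℂ‖₊ : ℝ≥0∞) ^ 2 = (‖x‖₊ : ℝ≥0∞) ^ 2 := by
  have hp : (0:ℝ) < (2 : ℝ≥0∞).toReal := by norm_num
  have h := lp.hasSum_norm hp (e.repr x)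
  have ht : (2 : ℝ≥0∞).toReal = (2:ℝ) := by norm_num
  rw [ht] at h
  simp_rw [Real.rpow_two] at h
  have hsum : Summable (fun i => ‖e.repr x i‖ ^ 2) := h.summable
  have htsum : ∑' i, ‖e.repr x i‖ ^ 2 = ‖x‖ ^ 2 := by
    rw [h.tsum_eq, e.repr.norm_map]
  calc ∑' i, (‖⟪e i, x⟫_ℂ‖₊ : ℝ≥0∞) ^ 2
      = ∑' i, ENNReal.ofReal (‖e.repr x i‖ ^ 2) := by
        congr 1; ext i
        rw [← e.repr_apply_apply, ENNReal.ofReal_pow (norm_nonneg _), ofReal_norm, enorm_eq_nnnorm]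
    _ = ENNReal.ofReal (∑' i, ‖e.repr x i‖ ^ 2) :=
        (ENNReal.ofReal_tsum_of_nonneg (fun i => by positivity) hsum).symm
    _ = (‖x‖₊ : ℝ≥0∞) ^ 2 := by
        rw [htsum, ENNReal.ofReal_pow (norm_nonneg _), ofReal_norm, enorm_eq_nnnorm]

lemma hs_ofReal {α E' : Type*} [NormedAddCommGroup E'] (g : α → E')
    (h : Summable fun a => ‖g a‖ ^ 2) :
    ∑' a, (‖g a‖₊ : ℝ≥0∞) ^ 2 = ENNReal.ofReal (∑' a, ‖g a‖ ^ 2) := by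
  rw [ENNReal.ofReal_tsum_of_nonneg (fun a => by positivity) h]
  exact tsum_congr fun a => by
    rw [ENNReal.ofReal_pow (norm_nonneg _), ofReal_norm, enorm_eq_nnnorm]

/-- A bounded operator `H₀` is Hilbert–Schmidt (i.e. `Σ_i ‖H₀ e_i‖² < ∞` for an
orthonormal basis `(e i)`) iff `Σ_k ‖H₀ f_k‖² < ∞` for a (hence, as `f` is arbitrary, every)
frame `(f k)`; moreover `√A ‖H₀‖_HS ≤ (Σ_k ‖H₀ f_k‖²)^{1/2} ≤ √B ‖H₀‖_HS`. -/
theorem hilbertSchmidt_iff_frame_sum_sq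
    {H : Type*} [NormedAddCommGroup H] [InnerProductSpace ℂ H] [CompleteSpace H]
    {ι κ : Type*} (e : HilbertBasis ι ℂ H) (f : κ → H) (A B : ℝ)
    (hA : 0 < A) (hB : 0 < B)
    (hframe : ∀ x : H,
      A * ‖x‖ ^ 2 ≤ ∑' k, ‖⟪f k, x⟫_ℂ‖ ^ 2 ∧ ∑' k, ‖⟪f k, x⟫_ℂ‖ ^ 2 ≤ B * ‖x‖ ^ 2)
    (H₀ : H →L[ℂ] H) :
    (Summable (fun i => ‖H₀ (e i)‖ ^ 2) ↔ Summable (fun k => ‖H₀ (f k)‖ ^ 2)) ∧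
      Real.sqrt A * Real.sqrt (∑' i, ‖H₀ (e i)‖ ^ 2) ≤ Real.sqrt (∑' k, ‖H₀ (f k)‖ ^ 2) ∧
      Real.sqrt (∑' k, ‖H₀ (f k)‖ ^ 2) ≤ Real.sqrt B * Real.sqrt (∑' i, ‖H₀ (e i)‖ ^ 2) := by
  classical
  set T : H →L[ℂ] H := ContinuousLinearMap.adjoint H₀ with hT
  -- frame sums are summable
  have hS : ∀ x : H, Summable (fun k => ‖⟪f k, x⟫_ℂ‖ ^ 2) := by
    intro x
    by_cases hx : x = 0
    · simpa [hx] using summable_zero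
    · by_contra h
      have := (hframe x).1
      rw [tsum_eq_zero_of_not_summable h] at this
      have hxp : 0 < ‖x‖ := norm_pos_iff.mpr hx
      have hx2 : 0 < A * ‖x‖ ^ 2 := by positivity
      linarith
  -- ENNReal frame bounds
  have hEF : ∀ x : H,
      ENNReal.ofReal A * (‖x‖₊ : ℝ≥0∞) ^ 2 ≤ ∑' k, (‖⟪f k, x⟫_ℂ‖₊ : ℝ≥0∞) ^ 2 ∧
      ∑' k, (‖⟪f k, x⟫_ℂ‖₊ : ℝ≥0∞) ^ 2 ≤ ENNReal.ofReal B * (‖x‖₊ : ℝ≥0∞) ^ 2 := by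
    intro x
    have hre : ∑' k, (‖⟪f k, x⟫_ℂ‖₊ : ℝ≥0∞) ^ 2
        = ENNReal.ofReal (∑' k, ‖⟪f k, x⟫_ℂ‖ ^ 2) := hs_ofReal _ (hS x)
    have hxn : ∀ C : ℝ, 0 ≤ C → ENNReal.ofReal (C * ‖x‖ ^ 2)
        = ENNReal.ofReal C * (‖x‖₊ : ℝ≥0∞) ^ 2 := by
      intro C hC
      rw [ENNReal.ofReal_mul hC, ENNReal.ofReal_pow (norm_nonneg _),
        ofReal_norm, enorm_eq_nnnorm]
    constructor
    · rw [hre, ← hxn A hA.le]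
      exact ENNReal.ofReal_le_ofReal (hframe x).1
    · rw [hre, ← hxn B hB.le]
      exact ENNReal.ofReal_le_ofReal (hframe x).2
  set E : ℝ≥0∞ := ∑' i, (‖H₀ (e i)‖₊ : ℝ≥0∞) ^ 2 with hE
  set F : ℝ≥0∞ := ∑' k, (‖H₀ (f k)‖₊ : ℝ≥0∞) ^ 2 with hF
  set Ed : ℝ≥0∞ := ∑' i, (‖T (e i)‖₊ : ℝ≥0∞) ^ 2 with hEd
  have hnn : ∀ y : H, ∀ i : ι, (‖⟪e i, H₀ y⟫_ℂ‖₊ : ℝ≥0∞) = (‖⟪y, T (e i)⟫_ℂ‖₊ : ℝ≥0∞) := by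
    intro y i
    congr 1
    apply NNReal.coe_injective
    show ‖⟪e i, H₀ y⟫_ℂ‖ = ‖⟪y, T (e i)⟫_ℂ‖
    rw [← ContinuousLinearMap.adjoint_inner_left, ← hT, norm_inner_symm]
  -- E = Ed
  have hEEd : E = Ed := by
    calc E = ∑' i, ∑' j, (‖⟪e j, H₀ (e i)⟫_ℂ‖₊ : ℝ≥0∞) ^ 2 :=
        tsum_congr fun i => (hs_parseval e _).symm
      _ = ∑' j, ∑' i, (‖⟪e j, H₀ (e i)⟫_ℂ‖₊ : ℝ≥0∞) ^ 2 := ENNReal.tsum_comm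
      _ = ∑' j, ∑' i, (‖⟪e i, T (e j)⟫_ℂ‖₊ : ℝ≥0∞) ^ 2 := by
          refine tsum_congr fun j => tsum_congr fun i => ?_
          rw [hnn (e i) j]
      _ = Ed := tsum_congr fun j => hs_parseval e _
  -- F as double sum
  have hFd : F = ∑' i, ∑' k, (‖⟪f k, T (e i)⟫_ℂ‖₊ : ℝ≥0∞) ^ 2 := by
    calc F = ∑' k, ∑' i, (‖⟪e i, H₀ (f k)⟫_ℂ‖₊ : ℝ≥0∞) ^ 2 :=
        tsum_congr fun k => (hs_parseval e _).symm
      _ = ∑' i, ∑' k, (‖⟪e i, H₀ (f k)⟫_ℂ‖₊ : ℝ≥0∞) ^ 2 := ENNReal.tsum_comm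
      _ = ∑' i, ∑' k, (‖⟪f k, T (e i)⟫_ℂ‖₊ : ℝ≥0∞) ^ 2 :=
          tsum_congr fun i => tsum_congr fun k => by rw [hnn (f k) i]
  have hAF : ENNReal.ofReal A * E ≤ F := by
    rw [hEEd, hFd, ← ENNReal.tsum_mul_left]
    exact ENNReal.tsum_le_tsum fun i => (hEF (T (e i))).1
  have hFB : F ≤ ENNReal.ofReal B * E := by
    rw [hEEd, hFd, ← ENNReal.tsum_mul_left]
    exact ENNReal.tsum_le_tsum fun i => (hEF (T (e i))).2
  have hoA : ENNReal.ofReal A ≠ 0 := by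
    simp [ENNReal.ofReal_eq_zero, not_le, hA]
  have hiff : E ≠ ⊤ ↔ F ≠ ⊤ := by
    constructor
    · intro hEt
      exact ne_top_of_le_ne_top (ENNReal.mul_ne_top ENNReal.ofReal_ne_top hEt) hFB
    · intro hFt
      intro hEt
      rw [hEt, ENNReal.mul_top hoA] at hAF
      exact hFt (top_le_iff.mp hAF)
  refine ⟨?_, ?_, ?_⟩
  · rw [hs_conv_summable, hs_conv_summable, ← hE, ← hF]
    exact hiff
  all_goals {
    rw [hs_conv_tsum, hs_conv_tsum, ← hE, ← hF]
    by_cases hEt : E = ⊤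
    · have hFt : F = ⊤ := by
        by_contra h
        exact (hiff.mpr h) hEt
      simp [hEt, hFt]
    · have hFt : F ≠ ⊤ := hiff.mp hEt
      have hx0 : (0:ℝ) ≤ E.toReal := ENNReal.toReal_nonneg
      have h1 : A * E.toReal ≤ F.toReal := by
        have := ENNReal.toReal_mono hFt hAF
        rwa [ENNReal.toReal_mul, ENNReal.toReal_ofReal hA.le] at this
      have h2 : F.toReal ≤ B * E.toReal := by
        have := ENNReal.toReal_mono (ENNReal.mul_ne_top ENNReal.ofReal_ne_top hEt) hFB
        rwa [ENNReal.toReal_mul, ENNReal.toReal_ofReal hB.le] at this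
      first
      | { rw [← Real.sqrt_mul hA.le]; exact Real.sqrt_le_sqrt h1 }
      | { rw [← Real.sqrt_mul hB.le]; exact Real.sqrt_le_sqrt h2 }
  }
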